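/- Let τ be a finite relational signature and Γ a valued τ-structure with countable domain C and oligomorphic automorphism group such that every valued relation of Γ takes only values ≥ 0. Let S ∈ τ be such that S^Γ attains the value 0 and attains at least one positive finite value; let m be the smallest positive value attained by S^Γ and M the largest finite value attained by any valued relation of Γ. Let R be the valued relation with R(a) = 0 if S^Γ(a) = 0 and R(a) = ∞ otherwise (i.e. R = Opt(S^Γ)). Let φ(x_1,…,x_n) = Σ_{i=1}^k φ_i be a finite formal sum of k atoms, each atom using a symbol of τ (interpreted in Γ) or the relation R, and let φ' be obtained from φ by replacing every atom involving R with k·⌈M/m⌉+1 copies of the same atom with R replaced by S^Γ. Then for every u ∈ ℚ and every a ∈ C^n: φ'(a) ≤ min(kM, u) if and only if φ(a) ≤ u. -/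

import Mathlib

open MeasureTheory
open scoped ENNReal NNReal

/-- The value space `ℚ ∪ {∞}`. -/
abbrev QInf : Type := WithTop ℚ

/-- The embedding of `ℚ ∪ {∞}` into the extended reals. -/
noncomputable def QInf.toE (x : QInf) : EReal :=
  WithTop.recTopCoe ⊤ (fun q : ℚ => ((q : ℝ) : EReal)) x

/-- A relational signature: a collection of relation symbols with arities. -/
structure Signature where
  symbols : Type
  arity : symbols → ℕ

/-- A valued `τ`-structure with domain `C`: each symbol is interpreted as a valued relation. -/
def VStruct (τ : Signature) (C : Type) : Type :=
  ∀ s : τ.symbols, (Fin (τ.arity s) → C) → QInf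

/-- An atom `R(x_{i_1},…,x_{i_k})` with variables from `V`. -/
structure SAtom (τ : Signature) (V : Type) where
  sym : τ.symbols
  vars : Fin (τ.arity sym) → V

/-- A `τ`-expression: a finite formal sum of atoms. -/
def Expr (τ : Signature) (V : Type) : Type := List (SAtom τ V)

/-- Evaluation of a `τ`-expression in a valued structure. -/
def Expr.eval {τ : Signature} {C V : Type} (Γ : VStruct τ C) (φ : Expr τ V)
    (a : V → C) : QInf :=
  (φ.map fun t => Γ t.sym fun i => a (t.vars i)).sum

/-- The product topology on `D → C` where `C` carries the discrete topology. -/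
def fnTop (D C : Type) : TopologicalSpace (D → C) :=
  @Pi.topologicalSpace D (fun _ => C) (fun _ => ⊥)

/-- The Borel σ-algebra on `D → C` for the product of discrete topologies. -/
noncomputable def fnBorel (D C : Type) : MeasurableSpace (D → C) :=
  @borel (D → C) (fnTop D C)

/-- A fractional map from `D` to `C`: a Borel probability measure on `C^D`. -/
def IsFracMap {D C : Type} (ω : @Measure (D → C) (fnBorel D C)) : Prop :=
  @IsProbabilityMeasure (D → C) (fnBorel D C) ω

/-- The positive part of an extended real, as an extended nonnegative real. -/
noncomputable def erealPos (x : EReal) : ℝ≥0∞ :=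
  if x = ⊤ then ⊤ else ENNReal.ofReal x.toReal

/-- The `EReal`-valued Lebesgue integral: integral of the positive part minus
integral of the negative part. -/
noncomputable def EIntg {D C : Type} (ω : @Measure (D → C) (fnBorel D C))
    (X : (D → C) → EReal) : EReal :=
  ((@MeasureTheory.lintegral (D → C) (fnBorel D C) ω fun f => erealPos (X f) : ℝ≥0∞) : EReal)
    - ((@MeasureTheory.lintegral (D → C) (fnBorel D C) ω fun f => erealPos (-X f) : ℝ≥0∞) : EReal)

/-- Existence of the `EReal`-valued Lebesgue integral: the integrand is Borel measurable and
not both the positive and the negative part have infinite integral. -/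
def EIntEx {D C : Type} (ω : @Measure (D → C) (fnBorel D C)) (X : (D → C) → EReal) : Prop :=
  (@Measurable (D → C) EReal (fnBorel D C) inferInstance X) ∧
    ((@MeasureTheory.lintegral (D → C) (fnBorel D C) ω fun f => erealPos (X f)) ≠ ⊤ ∨
      (@MeasureTheory.lintegral (D → C) (fnBorel D C) ω fun f => erealPos (-X f)) ≠ ⊤)

/-- A fractional homomorphism from `Δ` to `Γ`. -/
def IsFracHom {τ : Signature} {D C : Type} (Δ : VStruct τ D) (Γ : VStruct τ C)
    (ω : @Measure (D → C) (fnBorel D C)) : Prop :=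
  IsFracMap ω ∧
    ∀ (s : τ.symbols) (a : Fin (τ.arity s) → D),
      EIntEx ω (fun f => QInf.toE (Γ s (f ∘ a))) ∧
        EIntg ω (fun f => QInf.toE (Γ s (f ∘ a))) ≤ QInf.toE (Δ s a)

/-- An automorphism of a valued structure. -/
def IsVAuto {τ : Signature} {C : Type} (Γ : VStruct τ C) (α : Equiv.Perm C) : Prop :=
  ∀ (s : τ.symbols) (a : Fin (τ.arity s) → C), Γ s (fun i => α (a i)) = Γ s a

/-- The automorphism group of a valued structure is oligomorphic: for each `k` there are
finitely many orbits of `k`-tuples. -/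
def VOligo {τ : Signature} {C : Type} (Γ : VStruct τ C) : Prop :=
  ∀ k : ℕ, ∃ F : Set (Fin k → C), F.Finite ∧
    ∀ a : Fin k → C, ∃ b ∈ F, ∃ α : Equiv.Perm C,
      IsVAuto Γ α ∧ (fun i => α (b i)) = a

/-- correctness of the reduction eliminating `Opt`: let `Γ` be a valued
structure with finite signature, countable domain, oligomorphic automorphism group and
non-negative values; let `S` be a symbol whose valued relation attains `0` and a positive
finite value, let `m` be the least positive value of `S^Γ` and `M` the largest finite value
attained by any valued relation of `Γ`, and let `R = Opt(S^Γ)`.  If `φ = Σ_{i=1}^k φ_i`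
is a finite formal sum of atoms over `τ ∪ {R}` and `φ'` is obtained from `φ` by replacing
every atom involving `R` by `k·⌈M/m⌉+1` copies of the same atom with `R` replaced by `S`,
then for every threshold `u ∈ ℚ` and every assignment `a`:
`φ'(a) ≤ min(kM, u)` iff `φ(a) ≤ u`. -/
theorem opt_reduction_correct {τ : Signature} [Finite τ.symbols] {C : Type} [Countable C]
    (Γ : VStruct τ C) (holig : VOligo Γ)
    (hpos : ∀ (s : τ.symbols) (a : Fin (τ.arity s) → C), 0 ≤ Γ s a)
    (S : τ.symbols)
    (hS0 : ∃ a, Γ S a = 0)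
    (m : ℚ) (hm0 : 0 < m) (hmatt : ∃ a, Γ S a = (m : QInf))
    (hmmin : ∀ (a : Fin (τ.arity S) → C) (q : ℚ), Γ S a = (q : QInf) → 0 < q → m ≤ q)
    (M : ℚ) (hMatt : ∃ s a, Γ s a = (M : QInf))
    (hMmax : ∀ (s : τ.symbols) (a : Fin (τ.arity s) → C) (q : ℚ),
      Γ s a = (q : QInf) → q ≤ M)
    {n : ℕ} (φ : List (SAtom τ (Fin n) ⊕ (Fin (τ.arity S) → Fin n))) :
    ∀ (u : ℚ) (a : Fin n → C),
      ((φ.map (Sum.elim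
          (fun b => Γ b.sym fun i => a (b.vars i))
          (fun v => (φ.length * (⌈M / m⌉).toNat + 1) • Γ S fun i => a (v i)))).sum
        ≤ min (((φ.length : ℚ) * M : ℚ) : QInf) (u : QInf))
      ↔ ((φ.map (Sum.elim
            (fun b => Γ b.sym fun i => a (b.vars i))
            (fun v => if Γ S (fun i => a (v i)) = 0 then (0 : QInf) else ⊤))).sum
          ≤ (u : QInf)) := by
  classical
  intro u a
  obtain ⟨s0, a0, hMa⟩ := hMatt
  have hM0 : (0:ℚ) ≤ M := by
    have := hpos s0 a0; rw [hMa] at this; exact_mod_cast this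
  set f' : SAtom τ (Fin n) ⊕ (Fin (τ.arity S) → Fin n) → QInf :=
    Sum.elim (fun b => Γ b.sym fun i => a (b.vars i))
      (fun v => (φ.length * (⌈M / m⌉).toNat + 1) • Γ S fun i => a (v i)) with hf'
  set f : SAtom τ (Fin n) ⊕ (Fin (τ.arity S) → Fin n) → QInf :=
    Sum.elim (fun b => Γ b.sym fun i => a (b.vars i))
      (fun v => if Γ S (fun i => a (v i)) = 0 then (0 : QInf) else ⊤) with hf
  have hnn' : ∀ x ∈ φ.map f', 0 ≤ x := by
    intro x hx
    obtain ⟨y, hy, rfl⟩ := List.mem_map.mp hx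
    cases y with
    | inl b => exact hpos _ _
    | inr v => exact nsmul_nonneg (hpos _ _) _
  have hnn : ∀ x ∈ φ.map f, 0 ≤ x := by
    intro x hx
    obtain ⟨y, hy, rfl⟩ := List.mem_map.mp hx
    cases y with
    | inl b => exact hpos _ _
    | inr v =>
      simp only [hf, Sum.elim_inr]
      split <;> simp
  rcases Classical.em (∀ v, Sum.inr v ∈ φ → Γ S (fun i => a (v i)) = 0) with hall | hall
  · have hmapeq : φ.map f' = φ.map f := by
      apply List.map_congr_left
      intro y hy
      cases y with
      | inl b => rfl
      | inr v => simp [hf', hf, hall v hy]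
    rw [hmapeq]
    constructor
    · intro h; exact le_trans h (min_le_right _ _)
    · intro h
      refine le_min ?_ h
      have hle : ∀ x ∈ φ.map f, x ≤ (M : QInf) := by
        intro x hx
        obtain ⟨y, hy, rfl⟩ := List.mem_map.mp hx
        cases y with
        | inl b =>
          have hxs : f (Sum.inl b) ≤ (φ.map f).sum :=
            List.single_le_sum hnn _ (List.mem_map_of_mem (f := f) hy)
          have hxu : f (Sum.inl b) ≤ (u : QInf) := le_trans hxs h
          have hne : f (Sum.inl b) ≠ ⊤ := by
            intro hT; rw [hT] at hxu; exact absurd hxu (by simp)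
          obtain ⟨q, hq⟩ := WithTop.ne_top_iff_exists.mp hne
          rw [← hq]
          exact_mod_cast hMmax _ _ q (by simp [hf] at hq ⊢; exact hq.symm)
        | inr v =>
          simp only [hf, Sum.elim_inr, hall v hy, if_pos]
          exact_mod_cast hM0
      have := List.sum_le_card_nsmul (φ.map f) (M : QInf) hle
      rw [List.length_map] at this
      refine le_trans this ?_
      have : (φ.length • (M : QInf)) = (((φ.length : ℚ) * M : ℚ) : QInf) := by
        rw [show ((φ.length : ℚ) * M) = φ.length • M from (nsmul_eq_mul _ _).symm]
        exact_mod_cast rfl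
      rw [this]
  · push_neg at hall
    obtain ⟨v, hv, hvne⟩ := hall
    have hfv : f (Sum.inr v) = ⊤ := by simp [hf, hvne]
    have hsum : (φ.map f).sum = ⊤ := by
      have := List.single_le_sum hnn _ (List.mem_map_of_mem (f := f) hv)
      rw [hfv] at this
      exact top_le_iff.mp this
    have hbig : (((φ.length : ℚ) * M : ℚ) : QInf) < f' (Sum.inr v) := by
      simp only [hf', Sum.elim_inr]
      cases hGS : Γ S (fun i => a (v i)) with
      | none =>
        show (((φ.length : ℚ) * M : ℚ) : QInf)
          < (φ.length * (⌈M / m⌉).toNat + 1) • (⊤ : QInf)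
        rw [succ_nsmul, add_top]
        exact WithTop.coe_lt_top _
      | some q =>
        rw [show (some q : QInf) = ((q : ℚ) : QInf) from rfl] at hGS ⊢
        have hq0 : 0 ≤ q := by
          have := hpos S (fun i => a (v i)); rw [hGS] at this; exact_mod_cast this
        have hqpos : 0 < q := lt_of_le_of_ne hq0 (by
          intro h; exact hvne (by rw [hGS, ← h]; rfl))
        have hmq : m ≤ q := hmmin _ q hGS hqpos
        have hcast : ((φ.length * (⌈M / m⌉).toNat + 1) • ((q:ℚ) : QInf))
            = ((((φ.length * (⌈M / m⌉).toNat + 1) • q : ℚ)) : QInf) := by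
          exact_mod_cast rfl
        rw [hcast, WithTop.coe_lt_coe, nsmul_eq_mul]
        have htm : M ≤ ((⌈M / m⌉).toNat : ℚ) * m := by
          have h1 : M / m ≤ (⌈M / m⌉ : ℚ) := Int.le_ceil _
          have h2 : (⌈M / m⌉ : ℚ) ≤ ((⌈M / m⌉).toNat : ℚ) := by
            exact_mod_cast Int.self_le_toNat _
          have := (div_le_iff₀ hm0).mp (le_trans h1 h2)
          linarith
        have hk0 : (0:ℚ) ≤ (φ.length : ℚ) := by positivity
        push_cast
        nlinarith [mul_le_mul_of_nonneg_left hmq (by positivity :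
          (0:ℚ) ≤ (φ.length : ℚ) * ((⌈M / m⌉).toNat : ℚ) + 1),
          mul_le_mul_of_nonneg_left htm hk0]
    have hterm : f' (Sum.inr v) ≤ (φ.map f').sum :=
      List.single_le_sum hnn' _ (List.mem_map_of_mem (f := f') hv)
    constructor
    · intro h
      exact absurd (le_trans hterm (le_trans h (min_le_left _ _))) (not_le.mpr hbig)
    · intro h
      rw [hsum] at h
      exact absurd h (by simp)
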